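/- arXiv:1406.6576 — 4 statements merged into one kernel-verified Lean document; each statement's English description precedes it below -/
import Mathlib

section
/- In any reconfiguration sequence from I_b to I_r under token sliding in a tree, each individual token must be slid at least the tree distance between its initial and final position; consequently, on the path v_1,…,v_{8k} with I_b = {v_1,v_3,…,v_{2k-1}} and I_r = {v_{6k+2},…,v_{8k}}, at least Σ_{i=1}^{k} (distance moved by the i-th token) ≥ k·(4k+1) slides are required. -/
/-- `I` is an independent set of `G`. -/
def IndepSet {V : Type*} (G : SimpleGraph V) (I : Set V) : Prop :=
  ∀ ⦃u⦄, u ∈ I → ∀ ⦃v⦄, v ∈ I → ¬ G.Adj u v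

/-- `B` is obtained from `A` by sliding one token along an edge. -/
def Slide {V : Type*} (G : SimpleGraph V) (A B : Set V) : Prop :=
  ∃ u v, G.Adj u v ∧ A \ B = {u} ∧ B \ A = {v}

/-- One step of reconfiguration: a slide whose result is independent. -/
def Step {V : Type*} (G : SimpleGraph V) (A B : Set V) : Prop :=
  IndepSet G B ∧ Slide G A B

/-- `I` is reconfigurable to `J` by token sliding. -/
def Reconf {V : Type*} (G : SimpleGraph V) : Set V → Set V → Prop :=
  Relation.ReflTransGen (Step G)

/-- One reconfiguration step restricted to the induced subgraph on `S`. -/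
def StepOn {V : Type*} (G : SimpleGraph V) (S : Set V) (A B : Set V) : Prop :=
  B ⊆ S ∧ IndepSet G B ∧ Slide G A B

/-- Reconfigurability within the induced subgraph on `S`. -/
def ReconfOn {V : Type*} (G : SimpleGraph V) (S : Set V) : Set V → Set V → Prop :=
  Relation.ReflTransGen (StepOn G S)

/-- The token on `u` is `(G, I)`-rigid. -/
def Rigid {V : Type*} (G : SimpleGraph V) (I : Set V) (u : V) : Prop :=
  ∀ J, Reconf G I J → u ∈ J

/-- The token on `u` is rigid for the subgraph induced on `S`, starting from `I ∩ S`. -/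
def RigidOn {V : Type*} (G : SimpleGraph V) (S I : Set V) (u : V) : Prop :=
  ∀ J, ReconfOn G S (I ∩ S) J → u ∈ J

/-- The set `R(I)` of vertices carrying `(G, I)`-rigid tokens. -/
def RigidSet {V : Type*} (G : SimpleGraph V) (I : Set V) : Set V :=
  {u ∈ I | Rigid G I u}

/-- For an edge `{u, v}` of a tree `G`, `SubtreeSide G u v` is the vertex set of the
subtree `T_v^u`: the component of `v` after removing the edge, i.e. vertices strictly
closer to `v` than to `u`. -/
def SubtreeSide {V : Type*} (G : SimpleGraph V) (u v : V) : Set V :=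
  {x | G.dist x v < G.dist x u}

/-- The closed neighborhood `N[R]` of a vertex subset `R`. -/
def ClosedNbhd {V : Type*} (G : SimpleGraph V) (R : Set V) : Set V :=
  R ∪ {x | ∃ r ∈ R, G.Adj r x}


lemma aux_main {V : Type} [Fintype V] [DecidableEq V] {G : SimpleGraph V}
    (hc : G.Connected) :
    ∀ L : List (Set V), L.Chain' (fun A B => Slide G A B) →
      ∀ Ib Ir : Finset V, L.head? = some ↑Ib → L.getLast? = some ↑Ir →
      ∃ f : V → V, Set.BijOn f ↑Ib ↑Ir ∧
        ∑ x ∈ Ib, G.dist x (f x) ≤ L.length - 1 := by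
  intro L
  induction L with
  | nil => intro _ Ib Ir h; simp at h
  | cons A tail ih =>
    intro hch Ib Ir hhead hlast
    simp only [List.head?_cons, Option.some_inj] at hhead
    subst hhead
    match tail with
    | [] =>
      simp only [List.getLast?] at hlast
      rw [Option.some_inj] at hlast
      have : Ib = Ir := Finset.coe_injective hlast
      subst this
      exact ⟨id, Set.bijOn_id _, by simp⟩
    | B :: rest =>
      obtain ⟨hAB, hch'⟩ := List.isChain_cons_cons.mp hch
      obtain ⟨u, v, huv, hABu, hBAv⟩ := hAB
      have hu_mem : u ∈ (Ib : Set V) ∧ u ∉ B := by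
        have : u ∈ (Ib : Set V) \ B := hABu ▸ rfl
        exact this
      have hv_mem : v ∈ B ∧ v ∉ (Ib : Set V) := by
        have : v ∈ B \ (Ib : Set V) := hBAv ▸ rfl
        exact this
      have huIb : u ∈ Ib := hu_mem.1
      have hvIb : v ∉ Ib := hv_mem.2
      set Ib' : Finset V := insert v (Ib.erase u) with hIb'
      have hBcoe : B = (Ib' : Set V) := by
        ext x
        simp only [hIb', Finset.coe_insert, Finset.coe_erase, Set.mem_insert_iff,
          Set.mem_diff, Set.mem_singleton_iff]
        constructor
        · intro hxB
          by_cases hxA : x ∈ (Ib : Set V)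
          · right
            refine ⟨hxA, ?_⟩
            rintro rfl
            exact hu_mem.2 hxB
          · left
            have : x ∈ B \ (Ib : Set V) := ⟨hxB, hxA⟩
            rw [hBAv] at this
            exact this
        · rintro (rfl | ⟨hxA, hxu⟩)
          · exact hv_mem.1
          · by_contra hxB
            have : x ∈ (Ib : Set V) \ B := ⟨hxA, hxB⟩
            rw [hABu] at this
            exact hxu this
      obtain ⟨f', hbij', hsum'⟩ := ih hch' Ib' Ir (by rw [List.head?_cons, hBcoe])
        (by rw [← hlast, List.getLast?_cons_cons])
      set g : V → V := fun x => if x = u then v else x with hg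
      have hgbij : Set.BijOn g (Ib : Set V) (Ib' : Set V) := by
        refine ⟨?_, ?_, ?_⟩
        · intro x hx
          simp only [hg]
          split
          · simp [hIb']
          · next hxu =>
            simp only [hIb', Finset.coe_insert, Set.mem_insert_iff, Finset.coe_erase,
              Set.mem_diff, Set.mem_singleton_iff]
            exact Or.inr ⟨hx, hxu⟩
        · intro x hx y hy hxy
          by_cases hxu : x = u <;> by_cases hyu : y = u
          · rw [hxu, hyu]
          · simp only [hg, hxu, if_pos, hyu, if_neg, ite_true, ite_false] at hxy
            exact absurd (hxy ▸ hy) hvIb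
          · simp only [hg, hxu, hyu, ite_true, ite_false] at hxy
            exact absurd (hxy ▸ hx) hvIb
          · simpa [hg, hxu, hyu] using hxy
        · intro y hy
          simp only [hIb', Finset.coe_insert, Set.mem_insert_iff, Finset.coe_erase,
            Set.mem_diff, Set.mem_singleton_iff] at hy
          rcases hy with rfl | ⟨hyIb, hyu⟩
          · exact ⟨u, huIb, by simp [hg]⟩
          · exact ⟨y, hyIb, by simp [hg, hyu]⟩
      refine ⟨f' ∘ g, hbij'.comp hgbij, ?_⟩
      have hsum_split : ∑ x ∈ Ib, G.dist x (f' (g x)) =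
          G.dist u (f' v) + ∑ x ∈ Ib.erase u, G.dist x (f' x) := by
        rw [← Finset.add_sum_erase _ _ huIb]
        congr 1
        · simp [hg]
        · apply Finset.sum_congr rfl
          intro x hx
          have : x ≠ u := Finset.ne_of_mem_erase hx
          simp [hg, this]
      have hsum'_split : ∑ x ∈ Ib', G.dist x (f' x) =
          G.dist v (f' v) + ∑ x ∈ Ib.erase u, G.dist x (f' x) := by
        rw [hIb', Finset.sum_insert (by simp [hvIb])]
      have htri : G.dist u (f' v) ≤ 1 + G.dist v (f' v) := by
        have h1 : G.dist u v ≤ 1 := by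
          have := G.dist_le (SimpleGraph.Walk.cons huv SimpleGraph.Walk.nil)
          simpa using this
        have := hc.dist_triangle (u := u) (v := v) (w := f' v)
        omega
      have hlen : ((Ib : Set V) :: B :: rest).length - 1 = rest.length + 1 := by simp
      rw [hlen]
      have : (B :: rest).length - 1 = rest.length := by simp
      rw [this] at hsum'
      calc ∑ x ∈ Ib, G.dist x ((f' ∘ g) x)
          = G.dist u (f' v) + ∑ x ∈ Ib.erase u, G.dist x (f' x) := hsum_split
        _ ≤ 1 + (G.dist v (f' v) + ∑ x ∈ Ib.erase u, G.dist x (f' x)) := by omega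
        _ = 1 + ∑ x ∈ Ib', G.dist x (f' x) := by rw [hsum'_split]
        _ ≤ rest.length + 1 := by omega


lemma walk_bound {n : ℕ} : ∀ {a b : Fin n} (p : (SimpleGraph.pathGraph n).Walk a b),
    (b : ℕ) ≤ (a : ℕ) + p.length := by
  intro a b p
  induction p with
  | nil => simp
  | cons h q ih =>
    rw [SimpleGraph.pathGraph_adj] at h
    simp only [SimpleGraph.Walk.length_cons]
    omega

lemma dist_bound {n : ℕ} (hn : 0 < n) (a b : Fin n) :
    (b : ℕ) - (a : ℕ) ≤ (SimpleGraph.pathGraph n).dist a b := by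
  obtain ⟨m, rfl⟩ : ∃ m, n = m + 1 := ⟨n - 1, by omega⟩
  have hr : (SimpleGraph.pathGraph (m + 1)).Reachable a b :=
    (SimpleGraph.pathGraph_connected m) a b
  obtain ⟨p, hp⟩ := hr.exists_walk_length_eq_dist
  have := walk_bound p
  omega

theorem token_distance_lower_bound :
    (∀ (V : Type) [Fintype V] [DecidableEq V] (G : SimpleGraph V), G.IsTree →
      ∀ Ib Ir : Finset V, IndepSet G ↑Ib → IndepSet G ↑Ir →
        ∀ L : List (Set V), L.Chain' (Step G) →
          L.head? = some ↑Ib → L.getLast? = some ↑Ir →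
          ∃ f : V → V, Set.BijOn f ↑Ib ↑Ir ∧
            ∑ x ∈ Ib, G.dist x (f x) ≤ L.length - 1) ∧
    (∀ k : ℕ, 0 < k →
      ∀ L : List (Set (Fin (8 * k))),
        L.Chain' (Step (SimpleGraph.pathGraph (8 * k))) →
        L.head? = some {i : Fin (8 * k) | ∃ j < k, (i : ℕ) = 2 * j} →
        L.getLast? = some {i : Fin (8 * k) | ∃ j < k, (i : ℕ) = 6 * k + 1 + 2 * j} →
        k * (4 * k + 1) ≤ L.length - 1) := by
  constructor
  · intro V _ _ G hT Ib Ir _ _ L hch hhead hlast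
    exact aux_main hT.isConnected L (hch.imp fun _ _ h => h.2) Ib Ir hhead hlast
  · intro k hk L hch hhead hlast
    have hn : 0 < 8 * k := by omega
    set e : ℕ → Fin (8 * k) := fun m => ⟨m % (8 * k), Nat.mod_lt _ hn⟩ with he
    have heval : ∀ m, m < 8 * k → ((e m : Fin (8 * k)) : ℕ) = m := fun m hm => Nat.mod_eq_of_lt hm
    set Ib : Finset (Fin (8 * k)) := (Finset.range k).image (fun j => e (2 * j)) with hIb
    set Ir : Finset (Fin (8 * k)) := (Finset.range k).image (fun j => e (6 * k + 1 + 2 * j)) with hIr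
    have hIbcoe : (Ib : Set (Fin (8 * k))) = {i : Fin (8 * k) | ∃ j < k, (i : ℕ) = 2 * j} := by
      ext i
      simp only [hIb, Finset.coe_image, Set.mem_image, Finset.mem_coe, Finset.mem_range,
        Set.mem_setOf_eq]
      constructor
      · rintro ⟨j, hj, rfl⟩
        exact ⟨j, hj, heval _ (by omega)⟩
      · rintro ⟨j, hj, hji⟩
        refine ⟨j, hj, ?_⟩
        apply Fin.ext
        rw [heval _ (by omega), hji]
    have hIrcoe : (Ir : Set (Fin (8 * k))) = {i : Fin (8 * k) | ∃ j < k, (i : ℕ) = 6 * k + 1 + 2 * j} := by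
      ext i
      simp only [hIr, Finset.coe_image, Set.mem_image, Finset.mem_coe, Finset.mem_range,
        Set.mem_setOf_eq]
      constructor
      · rintro ⟨j, hj, rfl⟩
        exact ⟨j, hj, heval _ (by omega)⟩
      · rintro ⟨j, hj, hji⟩
        refine ⟨j, hj, ?_⟩
        apply Fin.ext
        rw [heval _ (by omega), hji]
    have hconn : (SimpleGraph.pathGraph (8 * k)).Connected := by
      obtain ⟨m, hm⟩ : ∃ m, 8 * k = m + 1 := ⟨8 * k - 1, by omega⟩
      rw [hm]
      exact SimpleGraph.pathGraph_connected m
    obtain ⟨f, hbij, hsum⟩ := aux_main hconn L (hch.imp fun _ _ h => h.2) Ib Ir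
      (by rw [hhead, hIbcoe]) (by rw [hlast, hIrcoe])
    have hcard : Ib.card = k := by
      rw [hIb, Finset.card_image_of_injOn, Finset.card_range]
      intro j hj j' hj' hjj'
      simp only [Finset.mem_coe, Finset.mem_range] at hj hj'
      have h1 := heval (2 * j) (by omega)
      have h2 := heval (2 * j') (by omega)
      have h3 : ((e (2 * j) : Fin (8 * k)) : ℕ) = ((e (2 * j') : Fin (8 * k)) : ℕ) :=
        congrArg Fin.val hjj'
      omega
    have hterm : ∀ x ∈ Ib, 4 * k + 1 ≤ (SimpleGraph.pathGraph (8 * k)).dist x (f x) := by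
      intro x hx
      have hxv : ∃ j < k, (x : ℕ) = 2 * j := by
        have : x ∈ (Ib : Set (Fin (8 * k))) := hx
        rwa [hIbcoe] at this
      have hfx : ∃ j < k, ((f x : Fin (8 * k)) : ℕ) = 6 * k + 1 + 2 * j := by
        have : f x ∈ (Ir : Set (Fin (8 * k))) := hbij.mapsTo hx
        rwa [hIrcoe] at this
      obtain ⟨j, hj, hxj⟩ := hxv
      obtain ⟨j', hj', hfxj⟩ := hfx
      have := dist_bound hn x (f x)
      omega
    calc k * (4 * k + 1) = ∑ _x ∈ Ib, (4 * k + 1) := by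
          rw [Finset.sum_const, hcard, smul_eq_mul]
      _ ≤ ∑ x ∈ Ib, (SimpleGraph.pathGraph (8 * k)).dist x (f x) := Finset.sum_le_sum hterm
      _ ≤ L.length - 1 := hsum
end

section
/- Let T be a tree, I an independent set of T with all tokens (T,I)-movable, v ∉ I, and let w ∈ I minimize dist(v,w) over I. If the v–w path is (v = p_0, p_1, …, p_ℓ = w) with ℓ ≥ 2, then no vertex of I lies on p_0,…,p_{ℓ-1} and no vertex of I is adjacent to any of p_0,…,p_{ℓ-2}. -/
lemma dist_getVert_le {V : Type*} {G : SimpleGraph V} (hc : G.Connected)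
    {u v : V} (p : G.Walk u v) : ∀ i, G.dist u (p.getVert i) ≤ i := by
  induction p with
  | nil => intro i; simp [SimpleGraph.Walk.getVert, SimpleGraph.dist_self]
  | @cons a b c h q ih =>
    intro i
    cases i with
    | zero => simp [SimpleGraph.Walk.getVert, SimpleGraph.dist_self]
    | succ n =>
      calc G.dist a ((q.cons h).getVert (n+1)) ≤ G.dist a b + G.dist b (q.getVert n) :=
            hc.dist_triangle
        _ ≤ 1 + n := by
            have h1 : G.dist a b ≤ 1 := by
              simpa using SimpleGraph.dist_le (SimpleGraph.Walk.cons h SimpleGraph.Walk.nil)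
            exact Nat.add_le_add h1 (ih n)
        _ = n + 1 := Nat.add_comm 1 n

theorem closest_token_path_empty {V : Type*} [Fintype V] (G : SimpleGraph V)
    (hT : G.IsTree) (I : Set V) (hI : IndepSet G I)
    (hmov : ∀ u ∈ I, ¬ Rigid G I u)
    (v : V) (hv : v ∉ I) (w : V) (hw : w ∈ I)
    (hmin : ∀ x ∈ I, G.dist v w ≤ G.dist v x)
    (p : G.Walk v w) (hp : p.IsPath) (hl : 2 ≤ p.length) :
    (∀ i < p.length, p.getVert i ∉ I) ∧
    (∀ i, i + 2 ≤ p.length → ∀ x ∈ I, ¬ G.Adj (p.getVert i) x) := by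
  
  have hlen : p.length = G.dist v w := by
    obtain ⟨q, hq, hqd⟩ := hT.isConnected.exists_path_of_dist v w
    rw [← hqd, (hT.existsUnique_path v w).unique hp hq]
  have key : ∀ i, G.dist v (p.getVert i) ≤ i := dist_getVert_le hT.isConnected p
  constructor
  · intro i hi hIi
    have h2 := hmin _ hIi
    have h1 := key i
    omega
  · intro i hi x hx hadj
    have h2 := hmin x hx
    have h1 := key i
    have hd1 : G.dist (p.getVert i) x ≤ 1 := by
      simpa using SimpleGraph.dist_le (SimpleGraph.Walk.cons hadj SimpleGraph.Walk.nil)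
    have h3 : G.dist v x ≤ G.dist v (p.getVert i) + G.dist (p.getVert i) x :=
      hT.isConnected.dist_triangle
    omega
end

section
/- Let I' be an independent set obtained from an independent set I of a graph G by adding a vertex (I ⊆ I'). If a token on u ∈ I is (G,I)-rigid, then it is (G,I')-rigid. (Adding tokens cannot make a rigid token movable.) -/
theorem rigid_of_superset {V : Type*} (G : SimpleGraph V) (I I' : Set V)
    (hI : IndepSet G I) (hI' : IndepSet G I') (hsub : I ⊆ I')
    (u : V) (hu : u ∈ I) (h : Rigid G I u) :
    Rigid G I' u := by
  intro J' hJ'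
  -- Track the sub-collection of tokens originating from I.
  suffices key : ∃ J, Reconf G I J ∧ J ⊆ J' by
    obtain ⟨J, hJ, hJsub⟩ := key
    exact hJsub (h J hJ)
  clear h hu u hI
  induction hJ' with
  | refl => exact ⟨I, Relation.ReflTransGen.refl, hsub⟩
  | @tail A' B' hstep step ih =>
    obtain ⟨J, hJ, hJA⟩ := ih
    obtain ⟨hBind, u0, v0, hadj, hAB, hBA⟩ := step
    have huv : u0 ≠ v0 := G.ne_of_adj hadj
    have hu0A : u0 ∈ A' ∧ u0 ∉ B' := by
      have : u0 ∈ A' \ B' := hAB ▸ rfl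
      exact this
    have hv0B : v0 ∈ B' ∧ v0 ∉ A' := by
      have : v0 ∈ B' \ A' := hBA ▸ rfl
      exact this
    have hA'subB' : ∀ x, x ∈ A' → x ≠ u0 → x ∈ B' := by
      intro x hx hne
      by_contra hxB
      have : x ∈ A' \ B' := ⟨hx, hxB⟩
      rw [hAB] at this
      exact hne this
    by_cases hu0J : u0 ∈ J
    · refine ⟨insert v0 (J \ {u0}), Relation.ReflTransGen.tail hJ ?_, ?_⟩
      · refine ⟨?_, u0, v0, hadj, ?_, ?_⟩
        · intro a ha b hb
          have hsubB : insert v0 (J \ {u0}) ⊆ B' := by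
            intro x hx
            rcases hx with rfl | ⟨hxJ, hxne⟩
            · exact hv0B.1
            · exact hA'subB' x (hJA hxJ) hxne
          exact hBind (hsubB ha) (hsubB hb)
        · ext x
          simp only [Set.mem_diff, Set.mem_insert_iff, Set.mem_singleton_iff]
          constructor
          · rintro ⟨hxJ, hx⟩
            push_neg at hx
            exact hx.2 hxJ
          · rintro rfl
            refine ⟨hu0J, ?_⟩
            simp [huv]
        · ext x
          simp only [Set.mem_diff, Set.mem_insert_iff, Set.mem_singleton_iff]
          constructor
          · rintro ⟨rfl | ⟨hxJ, _⟩, hxJ'⟩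
            · rfl
            · exact absurd hxJ hxJ'
          · rintro rfl
            exact ⟨Or.inl rfl, fun hv0J => hv0B.2 (hJA hv0J)⟩
      · intro x hx
        rcases hx with rfl | ⟨hxJ, hxne⟩
        · exact hv0B.1
        · exact hA'subB' x (hJA hxJ) hxne
    · refine ⟨J, hJ, fun x hx => hA'subB' x (hJA hx) ?_⟩
      rintro rfl; exact hu0J hx
end

section
/- Let I be an independent set of a tree T that contains at least one (T,I)-movable token. Then there exists u ∈ I and a neighbor w of u such that N(w) ∩ I = {u}; in particular, the token on u can be slid to w in a single move (I \ {u}) ∪ {w} is independent. -/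
theorem exists_immediately_slidable_token {V : Type*} [Fintype V] (G : SimpleGraph V)
    (hT : G.IsTree) (I : Set V) (hI : IndepSet G I)
    (hmov : ∃ u ∈ I, ¬ Rigid G I u) :
    ∃ u ∈ I, ∃ w : V, G.Adj u w ∧ G.neighborSet w ∩ I = {u} ∧
      IndepSet G (insert w (I \ {u})) := by
  obtain ⟨u, huI, hu⟩ := hmov
  simp only [Rigid, not_forall] at hu
  obtain ⟨J, hJ, huJ⟩ := hu
  rcases hJ.cases_head with rfl | ⟨K, ⟨hKind, a, b, hab, hAB, hBA⟩, _⟩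
  · exact absurd huI huJ
  · have haI : a ∈ I := by
      have : a ∈ I \ K := hAB ▸ rfl
      exact this.1
    have haK : a ∉ K := by
      have : a ∈ I \ K := hAB ▸ rfl
      exact this.2
    have hbK : b ∈ K := by
      have : b ∈ K \ I := hBA ▸ rfl
      exact this.1
    have hbI : b ∉ I := by
      have : b ∈ K \ I := hBA ▸ rfl
      exact this.2
    have hKeq : K = insert b (I \ {a}) := by
      ext x
      constructor
      · intro hxK
        by_cases hxI : x ∈ I
        · refine Set.mem_insert_of_mem _ ⟨hxI, ?_⟩
          rintro rfl; exact haK hxK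
        · have : x ∈ K \ I := ⟨hxK, hxI⟩
          rw [hBA, Set.mem_singleton_iff] at this
          subst this
          exact Set.mem_insert _ _
      · rintro (rfl | ⟨hxI, hxa⟩)
        · exact hbK
        · by_contra hxK
          have : x ∈ I \ K := ⟨hxI, hxK⟩
          rw [hAB] at this
          exact hxa this
    refine ⟨a, haI, b, hab, ?_, hKeq ▸ hKind⟩
    ext x
    constructor
    · rintro ⟨hxb, hxI⟩
      by_contra hxa
      simp only [Set.mem_singleton_iff] at hxa
      have hxK : x ∈ K := hKeq ▸ Set.mem_insert_of_mem _ ⟨hxI, hxa⟩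
      exact hKind hbK hxK hxb
    · rintro rfl
      exact ⟨hab.symm, haI⟩
end
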